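/- Define w̄ : (0,1) × (−√2, √2) → ℝ by w̄(x₁, x₂) := x₁·(1/2 − ln x₁)^{1/2} · (x₂²/2 − 1). Then for every (x₁, x₂) in the domain, the determinant of the Hessian of w̄ satisfies det D²w̄(x₁, x₂) ≤ 1. -/

import Mathlib

open Set Metric MeasureTheory

/-- The determinant of the Hessian matrix of `w` at `x`. -/
noncomputable def hessDet {n : ℕ} (w : EuclideanSpace ℝ (Fin n) → ℝ)
    (x : EuclideanSpace ℝ (Fin n)) : ℝ :=
  (Matrix.of fun i j : Fin n =>
    fderiv ℝ (fun y => fderiv ℝ w y (EuclideanSpace.single i 1)) x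
      (EuclideanSpace.single j 1)).det

namespace HDaux

noncomputable def A (t : ℝ) : ℝ := 1 / 2 - Real.log t
noncomputable def f (t : ℝ) : ℝ := t * Real.sqrt (A t)
noncomputable def f1 (t : ℝ) : ℝ := Real.sqrt (A t) - 1 / (2 * Real.sqrt (A t))
noncomputable def f2 (t : ℝ) : ℝ :=
  -(1 / (2 * t * Real.sqrt (A t))) - 1 / (4 * t * A t * Real.sqrt (A t))

lemma A_ge {t : ℝ} (ht : t ∈ Ioo (0:ℝ) 1) : 1 / 2 ≤ A t := by
  have : Real.log t ≤ 0 := Real.log_nonpos ht.1.le ht.2.le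
  unfold A; linarith

lemma sqrtA_pos {t : ℝ} (ht : t ∈ Ioo (0:ℝ) 1) : 0 < Real.sqrt (A t) :=
  Real.sqrt_pos.2 (by linarith [A_ge ht])

lemma hsq {t : ℝ} (ht : t ∈ Ioo (0:ℝ) 1) :
    HasDerivAt (fun t => Real.sqrt (A t)) (-t⁻¹ / (2 * Real.sqrt (A t))) t := by
  have hA : HasDerivAt A (-t⁻¹) t :=
    (Real.hasDerivAt_log ht.1.ne').const_sub (1/2)
  exact hA.sqrt (ne_of_gt (by linarith [A_ge ht]))

lemma hf {t : ℝ} (ht : t ∈ Ioo (0:ℝ) 1) : HasDerivAt f (f1 t) t := by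
  have h := (hasDerivAt_id t).mul (hsq ht)
  refine h.congr_deriv ?_
  have hS := (sqrtA_pos ht).ne'
  have htne := ht.1.ne'
  unfold f1 id
  field_simp
  ring

lemma hf1 {t : ℝ} (ht : t ∈ Ioo (0:ℝ) 1) : HasDerivAt f1 (f2 t) t := by
  have hS := sqrtA_pos ht
  have h2 : HasDerivAt (fun t => 2 * Real.sqrt (A t)) (2 * (-t⁻¹ / (2 * Real.sqrt (A t)))) t :=
    (hsq ht).const_mul 2
  have hinv := h2.inv (by positivity)
  have h := (hsq ht).sub (hinv.const_mul 1)
  have heq : f1 = fun t => Real.sqrt (A t) - 1 * (2 * Real.sqrt (A t))⁻¹ := by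
    funext u; unfold f1; rw [one_mul, one_div]
  rw [heq]
  refine h.congr_deriv ?_
  unfold f2
  set S := Real.sqrt (A t) with hSdef
  have hS2 : S ^ 2 = A t := Real.sq_sqrt (by linarith [A_ge ht])
  have htne := ht.1.ne'
  rw [← hS2]
  have hSne : S ≠ 0 := hS.ne'
  field_simp
  ring

end HDaux

section prodlemma

open HDaux

noncomputable def pr (i : Fin 2) : EuclideanSpace ℝ (Fin 2) →L[ℝ] ℝ := EuclideanSpace.proj i

lemma hasFDeriv_prod {u v : ℝ → ℝ} {u' v' : ℝ} {y : EuclideanSpace ℝ (Fin 2)}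
    (hu : HasDerivAt u u' (y 0)) (hv : HasDerivAt v v' (y 1)) :
    HasFDerivAt (fun z : EuclideanSpace ℝ (Fin 2) => u (z 0) * v (z 1))
      ((u' * v (y 1)) • pr 0 + (u (y 0) * v') • pr 1) y := by
  have h0 : HasFDerivAt (fun z : EuclideanSpace ℝ (Fin 2) => u (z 0)) (u' • pr 0) y :=
    hu.comp_hasFDerivAt y (pr 0).hasFDerivAt
  have h1 : HasFDerivAt (fun z : EuclideanSpace ℝ (Fin 2) => v (z 1)) (v' • pr 1) y :=
    hv.comp_hasFDerivAt y (pr 1).hasFDerivAt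
  have h := h0.mul h1
  refine h.congr_fderiv ?_
  ext z
  simp [pr, smul_smul]
  ring

lemma eval_single0 (a b : ℝ) :
    (((a • pr 0 + b • pr 1)) : EuclideanSpace ℝ (Fin 2) →L[ℝ] ℝ)
      (EuclideanSpace.single (0 : Fin 2) (1:ℝ)) = a := by
  have h0 : pr 0 (EuclideanSpace.single (0 : Fin 2) (1:ℝ)) = 1 := by
    show EuclideanSpace.single (0 : Fin 2) (1:ℝ) 0 = 1
    simp [EuclideanSpace.single_apply]
  have h1 : pr 1 (EuclideanSpace.single (0 : Fin 2) (1:ℝ)) = 0 := by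
    show EuclideanSpace.single (0 : Fin 2) (1:ℝ) 1 = 0
    simp [EuclideanSpace.single_apply]
  simp [h0, h1]

lemma eval_single1 (a b : ℝ) :
    (((a • pr 0 + b • pr 1)) : EuclideanSpace ℝ (Fin 2) →L[ℝ] ℝ)
      (EuclideanSpace.single (1 : Fin 2) (1:ℝ)) = b := by
  have h0 : pr 0 (EuclideanSpace.single (1 : Fin 2) (1:ℝ)) = 0 := by
    show EuclideanSpace.single (1 : Fin 2) (1:ℝ) 0 = 0
    simp [EuclideanSpace.single_apply]
  have h1 : pr 1 (EuclideanSpace.single (1 : Fin 2) (1:ℝ)) = 1 := by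
    show EuclideanSpace.single (1 : Fin 2) (1:ℝ) 1 = 1
    simp [EuclideanSpace.single_apply]
  simp [h0, h1]

end prodlemma

/-- For `w̄(x₁, x₂) = x₁·(1/2 - ln x₁)^{1/2}·(x₂²/2 - 1)` on `(0,1) × (-√2, √2)`, the
Hessian determinant is at most `1`. -/
theorem hessDet_upper_bound_dim_two :
    ∀ x : EuclideanSpace ℝ (Fin 2),
      x 0 ∈ Ioo (0 : ℝ) 1 → x 1 ∈ Ioo (-Real.sqrt 2) (Real.sqrt 2) →
        hessDet
            (fun y => y 0 * Real.sqrt (1 / 2 - Real.log (y 0)) * (y 1 ^ 2 / 2 - 1)) x ≤ 1 := by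
  intro x hx0 _hx1
  classical
  set w : EuclideanSpace ℝ (Fin 2) → ℝ :=
    fun y => y 0 * Real.sqrt (1 / 2 - Real.log (y 0)) * (y 1 ^ 2 / 2 - 1) with hw
  -- derivative of g s = s^2/2 - 1
  have hg : ∀ s : ℝ, HasDerivAt (fun s : ℝ => s ^ 2 / 2 - 1) s s := by
    intro s
    have := ((hasDerivAt_pow 2 s).div_const 2).sub_const 1
    refine this.congr_deriv ?_
    norm_num
  -- first derivative of w
  have hwF : ∀ y : EuclideanSpace ℝ (Fin 2), y 0 ∈ Ioo (0:ℝ) 1 →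
      HasFDerivAt w ((HDaux.f1 (y 0) * ((y 1) ^ 2 / 2 - 1)) • pr 0
        + (HDaux.f (y 0) * y 1) • pr 1) y := by
    intro y hy
    exact hasFDeriv_prod (HDaux.hf hy) (hg (y 1))
  -- neighborhood where the first coordinate stays in (0,1)
  have hmem : (fun y : EuclideanSpace ℝ (Fin 2) => y 0) ⁻¹' Ioo (0:ℝ) 1 ∈ nhds x :=
    (EuclideanSpace.proj (0 : Fin 2) : EuclideanSpace ℝ (Fin 2) →L[ℝ] ℝ).continuous.continuousAt.preimage_mem_nhds
      (Ioo_mem_nhds hx0.1 hx0.2)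
  -- first partials as functions, eventually
  have hev0 : (fun y => fderiv ℝ w y (EuclideanSpace.single (0 : Fin 2) 1)) =ᶠ[nhds x]
      (fun y => HDaux.f1 (y 0) * ((y 1) ^ 2 / 2 - 1)) := by
    filter_upwards [hmem] with y hy
    rw [(hwF y hy).fderiv, eval_single0]
  have hev1 : (fun y => fderiv ℝ w y (EuclideanSpace.single (1 : Fin 2) 1)) =ᶠ[nhds x]
      (fun y => HDaux.f (y 0) * y 1) := by
    filter_upwards [hmem] with y hy
    rw [(hwF y hy).fderiv, eval_single1]
  -- second derivatives
  have hp0 : HasFDerivAt (fun y : EuclideanSpace ℝ (Fin 2) =>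
        HDaux.f1 (y 0) * ((y 1) ^ 2 / 2 - 1))
      ((HDaux.f2 (x 0) * ((x 1) ^ 2 / 2 - 1)) • pr 0 + (HDaux.f1 (x 0) * x 1) • pr 1) x :=
    hasFDeriv_prod (HDaux.hf1 hx0) (hg (x 1))
  have hp1 : HasFDerivAt (fun y : EuclideanSpace ℝ (Fin 2) => HDaux.f (y 0) * y 1)
      ((HDaux.f1 (x 0) * x 1) • pr 0 + (HDaux.f (x 0) * 1) • pr 1) x :=
    hasFDeriv_prod (v := fun s => s) (HDaux.hf hx0) (hasDerivAt_id (x 1))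
  have hM00 : fderiv ℝ (fun y => fderiv ℝ w y (EuclideanSpace.single (0 : Fin 2) 1)) x
      (EuclideanSpace.single (0 : Fin 2) 1) = HDaux.f2 (x 0) * ((x 1) ^ 2 / 2 - 1) := by
    rw [hev0.fderiv_eq, hp0.fderiv, eval_single0]
  have hM01 : fderiv ℝ (fun y => fderiv ℝ w y (EuclideanSpace.single (0 : Fin 2) 1)) x
      (EuclideanSpace.single (1 : Fin 2) 1) = HDaux.f1 (x 0) * x 1 := by
    rw [hev0.fderiv_eq, hp0.fderiv, eval_single1]
  have hM10 : fderiv ℝ (fun y => fderiv ℝ w y (EuclideanSpace.single (1 : Fin 2) 1)) x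
      (EuclideanSpace.single (0 : Fin 2) 1) = HDaux.f1 (x 0) * x 1 := by
    rw [hev1.fderiv_eq, hp1.fderiv, eval_single0]
  have hM11 : fderiv ℝ (fun y => fderiv ℝ w y (EuclideanSpace.single (1 : Fin 2) 1)) x
      (EuclideanSpace.single (1 : Fin 2) 1) = HDaux.f (x 0) * 1 := by
    rw [hev1.fderiv_eq, hp1.fderiv, eval_single1]
  -- compute the determinant
  unfold hessDet
  rw [Matrix.det_fin_two]
  simp only [Matrix.of_apply]
  rw [hM00, hM01, hM10, hM11]
  -- the inequality
  set t := x 0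
  set s := x 1
  have ht := hx0
  have hS := HDaux.sqrtA_pos ht
  have hS2 : Real.sqrt (HDaux.A t) ^ 2 = HDaux.A t :=
    Real.sq_sqrt (by linarith [HDaux.A_ge ht])
  have hA := HDaux.A_ge ht
  have htpos : (0:ℝ) < t := ht.1
  have hff2 : HDaux.f t * HDaux.f2 t = -(1/2) - 1 / (4 * HDaux.A t) := by
    unfold HDaux.f HDaux.f2
    rw [← hS2]
    have hSne := hS.ne'
    have htne := htpos.ne'
    field_simp
  have hApos : (0:ℝ) < HDaux.A t := by linarith
  have hkey : HDaux.f t * HDaux.f2 t * (s ^ 2 / 2 - 1)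
      = (-(1/2) - 1 / (4 * HDaux.A t)) * (s ^ 2 / 2 - 1) := by rw [hff2]
  have hcle : 1 / (4 * HDaux.A t) ≤ 1 / 2 := by
    rw [div_le_div_iff₀ (by linarith) (by norm_num)]
    linarith
  have hcpos : 0 < 1 / (4 * HDaux.A t) := by positivity
  nlinarith [hkey, sq_nonneg (HDaux.f1 t * s), sq_nonneg s,
    mul_nonneg hcpos.le (sq_nonneg s)]
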